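/- arXiv:1612.03372 — 4 statements merged into one kernel-verified Lean document; each statement's English description precedes it below -/
import Mathlib

section
/- Let n ≥ 3 and 1 ≤ k < n/2, let ε = exp(2πi/n) ∈ ℂ, and let L be the Laplacian matrix of the generalized Petersen graph GP(n,k), regarded as a 2n×2n complex matrix. Then for every λ ∈ ℂ, det(λ·I_{2n} − L) = ∏_{j=0}^{n−1} ((3 − λ − ε^{−j} − ε^{j})·(3 − λ − ε^{−jk} − ε^{jk}) − 1). -/
open Polynomial

/-- The defining relation for the generalized Petersen graph `GP(n,k)`:
`u_i ~ u_{i+1}`, `u_i ~ v_i`, `v_i ~ v_{i+k}` (indices mod `n`);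
`Sum.inl i` is the outer vertex `u_i`, `Sum.inr i` the inner vertex `v_i`. -/
def gpRel (n k : ℕ) : (ZMod n ⊕ ZMod n) → (ZMod n ⊕ ZMod n) → Prop
  | Sum.inl i, Sum.inl j => j = i + 1
  | Sum.inl i, Sum.inr j => j = i
  | Sum.inr _, Sum.inl _ => False
  | Sum.inr i, Sum.inr j => j = i + (k : ZMod n)

instance (n k : ℕ) : DecidableRel (gpRel n k) := fun a b =>
  match a, b with
  | Sum.inl i, Sum.inl j => inferInstanceAs (Decidable (j = i + 1))
  | Sum.inl i, Sum.inr j => inferInstanceAs (Decidable (j = i))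
  | Sum.inr _, Sum.inl _ => inferInstanceAs (Decidable False)
  | Sum.inr i, Sum.inr j => inferInstanceAs (Decidable (j = i + (k : ZMod n)))

/-- The generalized Petersen graph `GP(n,k)`. -/
def genPetersen (n k : ℕ) : SimpleGraph (ZMod n ⊕ ZMod n) :=
  SimpleGraph.fromRel (gpRel n k)

instance (n k : ℕ) : DecidableRel (genPetersen n k).Adj := fun a b =>
  inferInstanceAs (Decidable (a ≠ b ∧ (gpRel n k a b ∨ gpRel n k b a)))

/-- The number of spanning trees of a graph `G`: the number of subgraphs that
contain all vertices and are trees. -/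
noncomputable def numSpanningTrees {V : Type*} (G : SimpleGraph V) : ℕ :=
  Nat.card {H : G.Subgraph // H.IsSpanning ∧ H.coe.IsTree}


open Matrix Sum

namespace GPAux

/-- power modulo -/
lemma pow_mod {ζ : ℂ} {n : ℕ} (hζ : ζ ^ n = 1) (m : ℕ) : ζ ^ (m % n) = ζ ^ m := by
  conv_rhs => rw [← Nat.mod_add_div m n]
  rw [pow_add, pow_mul, hζ, one_pow, mul_one]

lemma val_add_pow {ζ : ℂ} {n : ℕ} [NeZero n] (hζ : ζ ^ n = 1) (a b : ZMod n) :
    ζ ^ (a + b).val = ζ ^ a.val * ζ ^ b.val := by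
  rw [ZMod.val_add, pow_mod hζ, pow_add]

lemma val_mul_pow {ζ : ℂ} {n : ℕ} [NeZero n] (hζ : ζ ^ n = 1) (a b : ZMod n) :
    ζ ^ (a * b).val = ζ ^ (a.val * b.val) := by
  rw [ZMod.val_mul, pow_mod hζ]

lemma zpow_val_intCast {ζ : ℂ} {n : ℕ} [NeZero n] (hζ : ζ ^ n = 1) (hζ0 : ζ ≠ 0) (a : ℤ) :
    ζ ^ (((a : ZMod n)).val) = ζ ^ a := by
  have h : ((((a : ZMod n)).val : ℤ) : ZMod n) = (a : ZMod n) := by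
    push_cast
    simp [ZMod.natCast_val, ZMod.cast_id]
  have hdvd : ((n : ℤ)) ∣ ((((a : ZMod n)).val : ℤ) - a) := by
    rwa [← ZMod.intCast_zmod_eq_zero_iff_dvd, Int.cast_sub, sub_eq_zero]
  obtain ⟨t, ht⟩ := hdvd
  have h2 : ((((a : ZMod n)).val : ℤ)) = a + n * t := by linarith
  rw [← zpow_natCast, h2, zpow_add₀ hζ0, _root_.zpow_mul, zpow_natCast, hζ, _root_.one_zpow, mul_one]

lemma sum_zmod_val {M : Type*} [AddCommMonoid M] (n : ℕ) [NeZero n] (f : ℕ → M) :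
    ∑ j : ZMod n, f j.val = ∑ m ∈ Finset.range n, f m := by
  rw [← Fin.sum_univ_eq_sum_range]
  refine Fintype.sum_bijective (fun j : ZMod n => (⟨j.val, ZMod.val_lt j⟩ : Fin n)) ?_ _ _
    (fun j => rfl)
  rw [Fintype.bijective_iff_injective_and_card]
  exact ⟨fun a b h => ZMod.val_injective n (congrArg Fin.val h), by simp⟩

lemma prod_zmod_val {M : Type*} [CommMonoid M] (n : ℕ) [NeZero n] (f : ℕ → M) :
    ∏ j : ZMod n, f j.val = ∏ m ∈ Finset.range n, f m := by
  rw [← Fin.prod_univ_eq_prod_range]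
  refine Fintype.prod_bijective (fun j : ZMod n => (⟨j.val, ZMod.val_lt j⟩ : Fin n)) ?_ _ _
    (fun j => rfl)
  rw [Fintype.bijective_iff_injective_and_card]
  exact ⟨fun a b h => ZMod.val_injective n (congrArg Fin.val h), by simp⟩

lemma sum_root {ζ : ℂ} {n : ℕ} [NeZero n] (hprim : IsPrimitiveRoot ζ n) (d : ZMod n) :
    ∑ m : ZMod n, ζ ^ ((d * m).val) = if d = 0 then (n : ℂ) else 0 := by
  have hζ : ζ ^ n = 1 := hprim.pow_eq_one
  have key : ∀ m : ZMod n, ζ ^ ((d * m).val) = (ζ ^ d.val) ^ (m.val) := fun m => by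
    rw [val_mul_pow hζ, pow_mul]
  rw [Finset.sum_congr rfl (fun m _ => key m), sum_zmod_val n (fun t => (ζ ^ d.val) ^ t)]
  by_cases hd : d = 0
  · subst hd
    simp [ZMod.val_zero]
  · have hval : 0 < d.val := Nat.pos_of_ne_zero (fun h => hd (by rwa [← ZMod.val_eq_zero]))
    have hne1 : ζ ^ d.val ≠ 1 := hprim.pow_ne_one_of_pos_of_lt hval.ne' (ZMod.val_lt d)
    rw [geom_sum_eq hne1, if_neg hd]
    have h1 : (ζ ^ d.val) ^ n = 1 := by
      rw [← pow_mul, mul_comm, pow_mul, hζ, one_pow]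
    rw [h1, sub_self, zero_div]

end GPAux

namespace GPAux

lemma natCast_ne_zero_zmod {n m : ℕ} (h0 : 0 < m) (h1 : m < n) : (m : ZMod n) ≠ 0 := by
  rw [Ne, ZMod.natCast_eq_zero_iff]
  intro h
  exact absurd (Nat.le_of_dvd h0 h) (by omega)

section Graph

variable (n k : ℕ)

lemma adj_inl_inl (hn : 3 ≤ n) (i j : ZMod n) :
    (genPetersen n k).Adj (inl i) (inl j) ↔ (j = i + 1 ∨ j = i - 1) := by
  have h1 : (1 : ZMod n) ≠ 0 := by
    simpa using natCast_ne_zero_zmod (n := n) (m := 1) one_pos (by omega)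
  rw [genPetersen, SimpleGraph.fromRel_adj]
  simp only [gpRel, ne_eq, Sum.inl.injEq]
  constructor
  · rintro ⟨hne, h | h⟩
    · exact Or.inl h
    · exact Or.inr (by rw [h]; ring)
  · rintro (h | h)
    · subst h
      exact ⟨fun hh => h1 (by linear_combination -hh), Or.inl rfl⟩
    · subst h
      exact ⟨fun hh => h1 (by linear_combination hh), Or.inr (by ring)⟩

lemma adj_inl_inr (i j : ZMod n) :
    (genPetersen n k).Adj (inl i) (inr j) ↔ j = i := by
  rw [genPetersen, SimpleGraph.fromRel_adj]
  simp [gpRel]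

lemma adj_inr_inl (i j : ZMod n) :
    (genPetersen n k).Adj (inr i) (inl j) ↔ i = j := by
  rw [genPetersen, SimpleGraph.fromRel_adj]
  simp [gpRel, eq_comm]

lemma adj_inr_inr (hn : 3 ≤ n) (hk : 1 ≤ k) (hkn : 2 * k < n) (i j : ZMod n) :
    (genPetersen n k).Adj (inr i) (inr j) ↔ (j = i + k ∨ j = i - k) := by
  have hkz : (k : ZMod n) ≠ 0 := natCast_ne_zero_zmod (by omega) (by omega)
  rw [genPetersen, SimpleGraph.fromRel_adj]
  simp only [gpRel, ne_eq, Sum.inr.injEq]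
  constructor
  · rintro ⟨hne, h | h⟩
    · exact Or.inl h
    · exact Or.inr (by rw [h]; ring)
  · rintro (h | h)
    · subst h
      exact ⟨fun hh => hkz (by linear_combination -hh), Or.inl rfl⟩
    · subst h
      exact ⟨fun hh => hkz (by linear_combination hh), Or.inr (by ring)⟩

lemma deg_inl [NeZero n] (hn : 3 ≤ n) (hk : 1 ≤ k) (hkn : 2 * k < n) (i : ZMod n) :
    (genPetersen n k).degree (inl i) = 3 := by
  have h1 : (1 : ZMod n) ≠ 0 := by
    simpa using natCast_ne_zero_zmod (n := n) (m := 1) one_pos (by omega)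
  have h2 : (2 : ZMod n) ≠ 0 := by
    simpa using natCast_ne_zero_zmod (n := n) (m := 2) two_pos (by omega)
  have hnb : (genPetersen n k).neighborFinset (inl i) =
      {inl (i + 1), inl (i - 1), inr i} := by
    ext u
    rw [SimpleGraph.mem_neighborFinset]
    rcases u with j | j
    · rw [adj_inl_inl n k hn]
      simp [Sum.inl.injEq]
    · rw [adj_inl_inr]
      simp [eq_comm]
  rw [SimpleGraph.degree, hnb]
  rw [Finset.card_insert_of_notMem, Finset.card_insert_of_notMem, Finset.card_singleton]
  · simp
  · simp only [Finset.mem_insert, Finset.mem_singleton]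
    rintro (h | h)
    · exact h2 (by linear_combination (Sum.inl.inj h))
    · exact absurd h (by simp)

lemma deg_inr [NeZero n] (hn : 3 ≤ n) (hk : 1 ≤ k) (hkn : 2 * k < n) (i : ZMod n) :
    (genPetersen n k).degree (inr i) = 3 := by
  have h2k : ((2 * k : ℕ) : ZMod n) ≠ 0 := natCast_ne_zero_zmod (by omega) hkn
  have hnb : (genPetersen n k).neighborFinset (inr i) =
      {inr (i + k), inr (i - k), inl i} := by
    ext u
    rw [SimpleGraph.mem_neighborFinset]
    rcases u with j | j
    · rw [adj_inr_inl]
      simp [eq_comm]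
    · rw [adj_inr_inr n k hn hk hkn]
      simp [Sum.inr.injEq]
  rw [SimpleGraph.degree, hnb]
  rw [Finset.card_insert_of_notMem, Finset.card_insert_of_notMem, Finset.card_singleton]
  · simp
  · simp only [Finset.mem_insert, Finset.mem_singleton]
    rintro (h | h)
    · exact h2k (by push_cast; linear_combination (Sum.inr.inj h))
    · exact absurd h (by simp)

end Graph

end GPAux

noncomputable section Matrices

open Matrix Sum

namespace GPAux

variable (n k : ℕ) (lam ζ : ℂ)

def Fm : Matrix (ZMod n) (ZMod n) ℂ := of fun i j => ζ ^ (i * j).val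

def Gm : Matrix (ZMod n) (ZMod n) ℂ := of fun i j => ζ ^ (-(i * j)).val

def A1 : Matrix (ZMod n) (ZMod n) ℂ := of fun i j =>
  (if j = i then lam - 3 else 0) + (if j = i + 1 then 1 else 0) + (if j = i - 1 then 1 else 0)

def A2 : Matrix (ZMod n) (ZMod n) ℂ := of fun i j =>
  (if j = i then lam - 3 else 0) + (if j = i + (k : ZMod n) then 1 else 0)
    + (if j = i - (k : ZMod n) then 1 else 0)

def d1 : ZMod n → ℂ := fun j => lam - 3 + ζ ^ j.val + ζ ^ (-j).val

def d2 : ZMod n → ℂ := fun j =>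
  lam - 3 + ζ ^ ((k : ZMod n) * j).val + ζ ^ (-((k : ZMod n) * j)).val

lemma A1_mul_F [NeZero n] (hζ : ζ ^ n = 1) :
    A1 n lam * Fm n ζ = Fm n ζ * diagonal (d1 n lam ζ) := by
  ext i j
  rw [mul_diagonal]
  simp only [Matrix.mul_apply, A1, Fm, of_apply, add_mul, ite_mul, zero_mul, one_mul]
  rw [Finset.sum_add_distrib, Finset.sum_add_distrib, Finset.sum_ite_eq' Finset.univ i,
    Finset.sum_ite_eq' Finset.univ (i + 1), Finset.sum_ite_eq' Finset.univ (i - 1)]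
  simp only [Finset.mem_univ, if_pos]
  have e1 : (i + 1) * j = i * j + j := by ring
  have e2 : (i - 1) * j = i * j + (-j) := by ring
  rw [e1, e2, val_add_pow hζ, val_add_pow hζ, d1]
  ring

lemma A2_mul_F [NeZero n] (hζ : ζ ^ n = 1) :
    A2 n k lam * Fm n ζ = Fm n ζ * diagonal (d2 n k lam ζ) := by
  ext i j
  rw [mul_diagonal]
  simp only [Matrix.mul_apply, A2, Fm, of_apply, add_mul, ite_mul, zero_mul, one_mul]
  rw [Finset.sum_add_distrib, Finset.sum_add_distrib, Finset.sum_ite_eq' Finset.univ i,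
    Finset.sum_ite_eq' Finset.univ (i + (k : ZMod n)),
    Finset.sum_ite_eq' Finset.univ (i - (k : ZMod n))]
  simp only [Finset.mem_univ, if_pos]
  have e1 : (i + (k : ZMod n)) * j = i * j + (k : ZMod n) * j := by ring
  have e2 : (i - (k : ZMod n)) * j = i * j + (-((k : ZMod n) * j)) := by ring
  rw [e1, e2, val_add_pow hζ, val_add_pow hζ, d2]
  ring

lemma F_mul_G [NeZero n] (hprim : IsPrimitiveRoot ζ n) :
    Fm n ζ * Gm n ζ = (n : ℂ) • 1 := by
  have hζ : ζ ^ n = 1 := hprim.pow_eq_one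
  ext i j
  simp only [Matrix.mul_apply, Fm, Gm, of_apply, Matrix.smul_apply, Matrix.one_apply,
    smul_eq_mul]
  have key : ∀ m : ZMod n, ζ ^ ((i * m).val) * ζ ^ ((-(m * j)).val) = ζ ^ (((i - j) * m).val) := by
    intro m
    have e : (i - j) * m = i * m + (-(m * j)) := by ring
    rw [e, val_add_pow hζ]
  rw [Finset.sum_congr rfl (fun m _ => key m), sum_root hprim (i - j)]
  by_cases h : i = j
  · simp [h]
  · rw [if_neg (sub_ne_zero.mpr h), if_neg h, mul_zero]

lemma detF_ne [NeZero n] (hprim : IsPrimitiveRoot ζ n) : (Fm n ζ).det ≠ 0 := by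
  have h := congrArg Matrix.det (F_mul_G n ζ hprim)
  rw [Matrix.det_mul, Matrix.det_smul, Matrix.det_one, mul_one] at h
  have hn0 : ((n : ℂ)) ^ Fintype.card (ZMod n) ≠ 0 :=
    pow_ne_zero _ (Nat.cast_ne_zero.mpr (NeZero.ne n))
  exact left_ne_zero_of_mul (h ▸ hn0)

def Dm : Matrix (ZMod n ⊕ ZMod n) (ZMod n ⊕ ZMod n) ℂ :=
  fromBlocks (diagonal (d1 n lam ζ)) 1 1 (diagonal (d2 n k lam ζ))

def sumEquiv : (Fin 2 × ZMod n) ≃ (ZMod n ⊕ ZMod n) where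
  toFun p := if p.1 = 0 then inl p.2 else inr p.2
  invFun a := Sum.elim (fun i => ((0 : Fin 2), i)) (fun i => ((1 : Fin 2), i)) a
  left_inv p := by
    rcases p with ⟨a, i⟩
    fin_cases a <;> simp
  right_inv a := by rcases a with i | i <;> simp

lemma det_Dm [NeZero n] :
    (Dm n k lam ζ).det = ∏ i : ZMod n, (d1 n lam ζ i * d2 n k lam ζ i - 1) := by
  rw [← Matrix.det_submatrix_equiv_self (sumEquiv n)]
  have h : (Dm n k lam ζ).submatrix (sumEquiv n) (sumEquiv n)
      = blockDiagonal (fun i : ZMod n => !![d1 n lam ζ i, 1; 1, d2 n k lam ζ i]) := by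
    ext ⟨a, i⟩ ⟨b, j⟩
    fin_cases a <;> fin_cases b <;>
      · simp only [Matrix.submatrix_apply, sumEquiv, Equiv.coe_fn_mk, Dm, blockDiagonal_apply]
        norm_num [Matrix.fromBlocks_apply₁₁, Matrix.fromBlocks_apply₁₂,
          Matrix.fromBlocks_apply₂₁, Matrix.fromBlocks_apply₂₂, Matrix.diagonal_apply,
          Matrix.one_apply]
        try split_ifs <;> simp_all
  rw [h, Matrix.det_blockDiagonal]
  exact Finset.prod_congr rfl fun i _ => by rw [Matrix.det_fin_two_of]; ring

end GPAux

end Matrices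

namespace GPAux

open Matrix Sum

lemma ind_mul {P : Prop} [Decidable P] (c : ℂ) :
    (if P then c else 0) = c * (if P then 1 else 0) := by
  split_ifs <;> simp

lemma ind_comm {i j : ZMod n} (c : ℂ) :
    (if j = i then c else 0) = (if i = j then c else 0) := by
  simp [eq_comm]

lemma lap_block (n k : ℕ) [NeZero n] (lam : ℂ) (hn : 3 ≤ n) (hk : 1 ≤ k) (hkn : 2 * k < n) :
    lam • (1 : Matrix (ZMod n ⊕ ZMod n) (ZMod n ⊕ ZMod n) ℂ)
        - (genPetersen n k).lapMatrix ℂ =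
      fromBlocks (A1 n lam) 1 1 (A2 n k lam) := by
  have h1 : (1 : ZMod n) ≠ 0 := by
    simpa using natCast_ne_zero_zmod (n := n) (m := 1) one_pos (by omega)
  have h2 : (2 : ZMod n) ≠ 0 := by
    simpa using natCast_ne_zero_zmod (n := n) (m := 2) two_pos (by omega)
  have hkz : (k : ZMod n) ≠ 0 := natCast_ne_zero_zmod (by omega) (by omega)
  have h2k : (k : ZMod n) + (k : ZMod n) ≠ 0 := by
    have h := natCast_ne_zero_zmod (n := n) (m := 2 * k) (by omega) hkn
    intro hh; apply h; push_cast; linear_combination hh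
  ext a b
  rcases a with i | i <;> rcases b with j | j
  · simp only [Matrix.sub_apply, Matrix.smul_apply, smul_eq_mul, SimpleGraph.lapMatrix,
      SimpleGraph.degMatrix, SimpleGraph.adjMatrix_apply, Matrix.diagonal_apply,
      Matrix.one_apply, Matrix.fromBlocks_apply₁₁, A1, of_apply, Sum.inl.injEq,
      adj_inl_inl n k hn, deg_inl n k hn hk hkn, Nat.cast_ofNat]
    have hsplit : (if (j = i + 1 ∨ j = i - 1) then (1:ℂ) else 0)
        = (if j = i + 1 then (1:ℂ) else 0) + (if j = i - 1 then (1:ℂ) else 0) := by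
      by_cases p : j = i + 1 <;> by_cases q : j = i - 1
      · exact absurd (show (2 : ZMod n) = 0 by linear_combination q - p) h2
      · rw [if_pos (Or.inl p), if_pos p, if_neg q]; norm_num
      · rw [if_pos (Or.inr q), if_neg p, if_pos q]; norm_num
      · rw [if_neg (by tauto), if_neg p, if_neg q]; norm_num
    rw [hsplit, ind_comm (lam - 3), ind_mul (lam - 3), ind_mul (3 : ℂ)]
    ring
  · simp only [Matrix.sub_apply, Matrix.smul_apply, smul_eq_mul, SimpleGraph.lapMatrix,
      SimpleGraph.degMatrix, SimpleGraph.adjMatrix_apply, Matrix.diagonal_apply,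
      Matrix.one_apply, Matrix.fromBlocks_apply₁₂, adj_inl_inr n k]
    rw [if_neg (show ¬(inl i : ZMod n ⊕ ZMod n) = inr j by simp),
        if_neg (show ¬(inl i : ZMod n ⊕ ZMod n) = inr j by simp)]
    by_cases p : j = i
    · rw [if_pos p, if_pos p.symm]; ring
    · rw [if_neg p, if_neg fun h => p h.symm]; ring
  · simp only [Matrix.sub_apply, Matrix.smul_apply, smul_eq_mul, SimpleGraph.lapMatrix,
      SimpleGraph.degMatrix, SimpleGraph.adjMatrix_apply, Matrix.diagonal_apply,
      Matrix.one_apply, Matrix.fromBlocks_apply₂₁, adj_inr_inl n k]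
    rw [if_neg (show ¬(inr i : ZMod n ⊕ ZMod n) = inl j by simp),
        if_neg (show ¬(inr i : ZMod n ⊕ ZMod n) = inl j by simp)]
    ring
  · simp only [Matrix.sub_apply, Matrix.smul_apply, smul_eq_mul, SimpleGraph.lapMatrix,
      SimpleGraph.degMatrix, SimpleGraph.adjMatrix_apply, Matrix.diagonal_apply,
      Matrix.one_apply, Matrix.fromBlocks_apply₂₂, A2, of_apply, Sum.inr.injEq,
      adj_inr_inr n k hn hk hkn, deg_inr n k hn hk hkn, Nat.cast_ofNat]
    have hsplit : (if (j = i + (k : ZMod n) ∨ j = i - (k : ZMod n)) then (1:ℂ) else 0)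
        = (if j = i + (k : ZMod n) then (1:ℂ) else 0)
          + (if j = i - (k : ZMod n) then (1:ℂ) else 0) := by
      by_cases p : j = i + (k : ZMod n) <;> by_cases q : j = i - (k : ZMod n)
      · exact absurd (show (k : ZMod n) + (k : ZMod n) = 0 by linear_combination q - p) h2k
      · rw [if_pos (Or.inl p), if_pos p, if_neg q]; norm_num
      · rw [if_pos (Or.inr q), if_neg p, if_pos q]; norm_num
      · rw [if_neg (by tauto), if_neg p, if_neg q]; norm_num
    rw [hsplit, ind_comm (lam - 3), ind_mul (lam - 3), ind_mul (3 : ℂ)]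
    ring

end GPAux

open Matrix Sum GPAux

open Complex in
/-- The characteristic polynomial of the Laplacian of `GP(n,k)`
factors through the `n`-th roots of unity. -/
theorem charpoly_lapMatrix_genPetersen (n k : ℕ) (hn : 3 ≤ n) (hk : 1 ≤ k)
    (hkn : 2 * k < n) (lam : ℂ) :
    haveI : NeZero n := ⟨by omega⟩
    (lam • (1 : Matrix (ZMod n ⊕ ZMod n) (ZMod n ⊕ ZMod n) ℂ)
        - (genPetersen n k).lapMatrix ℂ).det =
      ∏ j ∈ Finset.range n,
        ((3 - lam - Complex.exp (2 * Real.pi * I / n) ^ (-(j : ℤ))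
            - Complex.exp (2 * Real.pi * I / n) ^ (j : ℤ)) *
         (3 - lam - Complex.exp (2 * Real.pi * I / n) ^ (-((j : ℤ) * k))
            - Complex.exp (2 * Real.pi * I / n) ^ ((j : ℤ) * k)) - 1) := by
  haveI : NeZero n := ⟨by omega⟩
  set ζ := Complex.exp (2 * Real.pi * I / n) with hζdef
  have hprim : IsPrimitiveRoot ζ n := Complex.isPrimitiveRoot_exp n (by omega)
  have hζ1 : ζ ^ n = 1 := hprim.pow_eq_one
  have hζ0 : ζ ≠ 0 := Complex.exp_ne_zero _
  have hMF : (lam • (1 : Matrix (ZMod n ⊕ ZMod n) (ZMod n ⊕ ZMod n) ℂ)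
      - (genPetersen n k).lapMatrix ℂ) * (fromBlocks (Fm n ζ) 0 0 (Fm n ζ))
      = (fromBlocks (Fm n ζ) 0 0 (Fm n ζ)) * Dm n k lam ζ := by
    rw [lap_block n k lam hn hk hkn, Dm, Matrix.fromBlocks_multiply,
      Matrix.fromBlocks_multiply, A1_mul_F n lam ζ hζ1, A2_mul_F n k lam ζ hζ1]
    simp
  have hF2 : (fromBlocks (Fm n ζ) 0 0 (Fm n ζ)).det ≠ 0 := by
    rw [Matrix.det_fromBlocks_zero₂₁]
    exact mul_ne_zero (detF_ne n ζ hprim) (detF_ne n ζ hprim)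
  have hdd := congrArg Matrix.det hMF
  rw [Matrix.det_mul, Matrix.det_mul] at hdd
  have hdet : (lam • (1 : Matrix (ZMod n ⊕ ZMod n) (ZMod n ⊕ ZMod n) ℂ)
      - (genPetersen n k).lapMatrix ℂ).det = (Dm n k lam ζ).det :=
    mul_right_cancel₀ hF2 (by rw [hdd]; ring)
  show (lam • (1 : Matrix (ZMod n ⊕ ZMod n) (ZMod n ⊕ ZMod n) ℂ)
      - (genPetersen n k).lapMatrix ℂ).det = _
  rw [hdet, det_Dm]
  have hpt : ∀ i : ZMod n, d1 n lam ζ i * d2 n k lam ζ i - 1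
      = ((3 - lam - ζ ^ (-(i.val : ℤ)) - ζ ^ ((i.val : ℤ))) *
         (3 - lam - ζ ^ (-((i.val : ℤ) * k)) - ζ ^ ((i.val : ℤ) * k)) - 1) := by
    intro i
    have w1 : ζ ^ i.val = ζ ^ ((i.val : ℤ)) := (zpow_natCast ζ i.val).symm
    have c2 : ((-(i.val : ℤ) : ℤ) : ZMod n) = -i := by
      push_cast
      simp [ZMod.natCast_val, ZMod.cast_id]
    have w2 : ζ ^ (-i).val = ζ ^ (-(i.val : ℤ)) := by
      rw [← c2, zpow_val_intCast hζ1 hζ0]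
    have c3 : ((((i.val : ℤ) * k) : ℤ) : ZMod n) = (k : ZMod n) * i := by
      push_cast
      simp only [ZMod.natCast_val, ZMod.cast_id]
      ring
    have w3 : ζ ^ ((k : ZMod n) * i).val = ζ ^ (((i.val : ℤ) * k)) := by
      rw [← c3, zpow_val_intCast hζ1 hζ0]
    have c4 : ((-((i.val : ℤ) * k) : ℤ) : ZMod n) = -((k : ZMod n) * i) := by
      push_cast
      simp only [ZMod.natCast_val, ZMod.cast_id]
      ring
    have w4 : ζ ^ (-((k : ZMod n) * i)).val = ζ ^ (-((i.val : ℤ) * k)) := by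
      rw [← c4, zpow_val_intCast hζ1 hζ0]
    simp only [d1, d2]
    rw [w2, w3, w4, w1]
    ring
  rw [Finset.prod_congr rfl (fun i _ => hpt i)]
  exact prod_zmod_val n (fun m => ((3 - lam - ζ ^ (-(m : ℤ)) - ζ ^ ((m : ℤ))) *
    (3 - lam - ζ ^ (-((m : ℤ) * k)) - ζ ^ ((m : ℤ) * k)) - 1))
end

section
/- Let n ≥ 1 and k ≥ 1 be integers, let ε = exp(2πi/n) ∈ ℂ, and let z_1, …, z_k ∈ ℂ be nonzero with z_s ≠ 1 for every s. Define H(z) = ∏_{s=1}^{k} (z − z_s)(z − z_s^{−1}) and w_s = (z_s + z_s^{−1})/2. Then ∏_{j=1}^{n−1} H(ε^j) = ∏_{s=1}^{k} (T_n(w_s) − 1)/(w_s − 1), where T_n is the Chebyshev polynomial of the first kind. -/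
open Polynomial Complex

lemma helper1 {n : ℕ} (hn : 0 < n) {ζ : ℂ} (hζ : IsPrimitiveRoot ζ n) (a : ℂ) :
    ∏ j ∈ Finset.range n, (a - ζ ^ j) = a ^ n - 1 := by
  have h := congrArg (Polynomial.eval a) (Polynomial.X_pow_sub_one_eq_prod hn hζ)
  simp only [Polynomial.eval_sub, Polynomial.eval_pow, Polynomial.eval_X, Polynomial.eval_one,
    Polynomial.eval_prod, Polynomial.eval_C] at h
  rw [h]
  have hv : (Polynomial.nthRootsFinset n (1 : ℂ)).val = (Multiset.range n).map (ζ ^ ·) := by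
    rw [Polynomial.nthRootsFinset, ← Multiset.toFinset_eq (hζ.nthRoots_one_nodup)]
    simpa using hζ.nthRoots_eq (one_pow n)
  rw [Finset.prod, Finset.prod, hv, Multiset.map_map, Finset.range_val]
  rfl

lemma helper2 {n : ℕ} {z : ℂ} (hz : z ≠ 0) :
    (Polynomial.Chebyshev.T ℂ n).eval ((z + z⁻¹)/2) = (z^n + z⁻¹^n)/2 := by
  have e1 : -(I * Complex.log z) * I = Complex.log z := by
    linear_combination (-(Complex.log z)) * Complex.I_sq
  have h1 : Complex.cos (-(I * Complex.log z)) = (z + z⁻¹)/2 := by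
    rw [Complex.cos, e1, show - -(I * Complex.log z) * I = -Complex.log z by
      linear_combination (Complex.log z) * Complex.I_sq,
      Complex.exp_neg, Complex.exp_log hz]
  have h2 : Complex.cos ((n : ℂ) * -(I * Complex.log z)) = (z^n + z⁻¹^n)/2 := by
    rw [Complex.cos, show ((n:ℂ) * -(I * Complex.log z)) * I = (n:ℂ) * Complex.log z by
      linear_combination (-(n:ℂ) * Complex.log z) * Complex.I_sq,
      show -((n:ℂ) * -(I * Complex.log z)) * I = -((n:ℂ) * Complex.log z) by
      linear_combination ((n:ℂ) * Complex.log z) * Complex.I_sq,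
      Complex.exp_neg, Complex.exp_nat_mul, Complex.exp_log hz, inv_pow]
  have := Polynomial.Chebyshev.T_complex_cos (-(I * Complex.log z)) n
  rw [h1] at this
  rw [this]
  rw [show ((n : ℤ) : ℂ) = (n : ℂ) by push_cast; ring] at *
  rw [h2]

lemma helper3 {n : ℕ} (hn : 1 ≤ n) {ζ : ℂ} (hζ : IsPrimitiveRoot ζ n) {z : ℂ}
    (hz0 : z ≠ 0) (hz1 : z ≠ 1) :
    ∏ j ∈ Finset.Ico 1 n, ((ζ ^ j - z) * (ζ ^ j - z⁻¹)) =
      ((Polynomial.Chebyshev.T ℂ n).eval ((z + z⁻¹) / 2) - 1) / ((z + z⁻¹) / 2 - 1) := by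
  have hn' : 0 < n := hn
  have hA : ∀ a : ℂ, ∏ j ∈ Finset.range n, (ζ ^ j - a) = (-1) ^ n * (a ^ n - 1) := by
    intro a
    calc ∏ j ∈ Finset.range n, (ζ ^ j - a) = ∏ j ∈ Finset.range n, (-1) * (a - ζ ^ j) :=
          Finset.prod_congr rfl (fun j _ => by ring)
      _ = (-1) ^ n * (a ^ n - 1) := by
          rw [Finset.prod_mul_distrib, Finset.prod_const, helper1 hn' hζ a, Finset.card_range]
  have hsplit : ∀ a : ℂ, ∏ j ∈ Finset.range n, (ζ ^ j - a)
      = (1 - a) * ∏ j ∈ Finset.Ico 1 n, (ζ ^ j - a) := by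
    intro a
    rw [Finset.range_eq_Ico, Finset.prod_eq_prod_Ico_succ_bot hn']
    simp
  set P := ∏ j ∈ Finset.Ico 1 n, (ζ ^ j - z) with hP
  set Q := ∏ j ∈ Finset.Ico 1 n, (ζ ^ j - z⁻¹) with hQ
  have key : ((1 - z) * P) * ((1 - z⁻¹) * Q) = (z ^ n - 1) * (z⁻¹ ^ n - 1) := by
    rw [← hsplit z, ← hsplit z⁻¹, hA z, hA z⁻¹]
    have h11 : ((-1 : ℂ) ^ n) * ((-1 : ℂ) ^ n) = 1 := by
      rw [← mul_pow]; norm_num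
    linear_combination (z ^ n - 1) * (z⁻¹ ^ n - 1) * h11
  have hc : z * z⁻¹ = 1 := mul_inv_cancel₀ hz0
  have hcn : z ^ n * z⁻¹ ^ n = 1 := by rw [← mul_pow, hc, one_pow]
  have h3 : (z + z⁻¹) / 2 - 1 ≠ 0 := by
    intro h
    have h2 : (z - 1) ^ 2 = 0 := by linear_combination 2 * z * h - hc
    exact hz1 (by simpa [sub_eq_zero] using pow_eq_zero_iff (n := 2) (by norm_num) |>.mp h2)
  rw [helper2 hz0, Finset.prod_mul_distrib, ← hP, ← hQ, eq_div_iff h3]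
  linear_combination (-1/2 : ℂ) * key + (1/2 : ℂ) * P * Q * hc - (1/2 : ℂ) * hcn

/-- For nonzero `z_1, …, z_k` with `z_s ≠ 1`, setting
`H(z) = ∏_s (z − z_s)(z − z_s⁻¹)` and `w_s = (z_s + z_s⁻¹)/2`, one has
`∏_{j=1}^{n−1} H(ε^j) = ∏_{s=1}^{k} (T_n(w_s) − 1)/(w_s − 1)` where `ε = exp(2πi/n)`. -/
theorem prod_H_roots_of_unity (n k : ℕ) (hn : 1 ≤ n) (hk : 1 ≤ k)
    (z : Fin k → ℂ) (hz0 : ∀ s, z s ≠ 0) (hz1 : ∀ s, z s ≠ 1) :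
    ∏ j ∈ Finset.Ico 1 n,
        (∏ s : Fin k,
          ((Complex.exp (2 * Real.pi * I / n) ^ (j : ℕ) - z s) *
           (Complex.exp (2 * Real.pi * I / n) ^ (j : ℕ) - (z s)⁻¹))) =
      ∏ s : Fin k,
        ((Polynomial.Chebyshev.T ℂ n).eval ((z s + (z s)⁻¹) / 2) - 1) /
          ((z s + (z s)⁻¹) / 2 - 1) := by
  have hζ : IsPrimitiveRoot (Complex.exp (2 * Real.pi * I / n)) n :=
    Complex.isPrimitiveRoot_exp n (by omega)
  rw [Finset.prod_comm]
  exact Finset.prod_congr rfl fun s _ => helper3 hn hζ (hz0 s) (hz1 s)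
end

section
/- Let n ≥ 1 be an integer and let w, s ∈ ℂ with s² = (1 + w)/2. Then T_n(w) − 1 = (w − 1)·U_{n−1}(s)², where T_n and U_{n−1} are the Chebyshev polynomials of the first and second kind. -/
open Polynomial

open Polynomial.Chebyshev in
private theorem cheb_pell (R : Type*) [CommRing R] (m : ℤ) :
    (T R m) ^ 2 - (X ^ 2 - 1) * (U R (m - 1)) ^ 2 = 1 ∧
      T R (m + 1) * T R m - (X ^ 2 - 1) * (U R m * U R (m - 1)) = X := by
  induction m using Polynomial.Chebyshev.induct with
  | zero =>
    refine ⟨by simp [U_neg_one], by simp [U_neg_one, T_one]⟩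
  | one =>
    constructor
    · simp only [T_one, U_zero, show (1:ℤ) - 1 = 0 from rfl]; ring
    · simp only [T_one, T_two, U_one, U_zero, show (1:ℤ) - 1 = 0 from rfl,
        show (1:ℤ) + 1 = 2 from rfl]; ring
  | add_two n ih1 ih2 =>
    obtain ⟨p1, q1⟩ := ih1
    obtain ⟨p0, q0⟩ := ih2
    have hT : T R ((n : ℤ) + 2) = 2 * X * T R ((n : ℤ) + 1) - T R n := T_add_two R n
    have hT3 : T R ((n : ℤ) + 3) = 2 * X * T R ((n : ℤ) + 2) - T R ((n : ℤ) + 1) := by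
      have h := T_add_two R ((n : ℤ) + 1)
      rwa [show (n : ℤ) + 1 + 2 = (n : ℤ) + 3 from by ring,
        show (n : ℤ) + 1 + 1 = (n : ℤ) + 2 from by ring] at h
    have hU : U R ((n : ℤ) + 1) = 2 * X * U R n - U R ((n : ℤ) - 1) := U_add_one R n
    have hU2 : U R ((n : ℤ) + 2) = 2 * X * U R ((n : ℤ) + 1) - U R n := U_add_two R n
    simp only [show (n : ℤ) + 1 - 1 = (n : ℤ) from by ring,
      show (n : ℤ) + 1 + 1 = (n : ℤ) + 2 from by ring] at p1 q1
    simp only [show (n : ℤ) + 2 - 1 = (n : ℤ) + 1 from by ring,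
      show (n : ℤ) + 2 + 1 = (n : ℤ) + 3 from by ring]
    have hP : (T R ((n : ℤ) + 2)) ^ 2 - (X ^ 2 - 1) * (U R ((n : ℤ) + 1)) ^ 2 = 1 := by
      linear_combination (norm := ring_nf)
        (T R ((n : ℤ) + 2) + 2 * X * T R ((n : ℤ) + 1) - T R n) * hT
          - (X ^ 2 - 1) * (U R ((n : ℤ) + 1) + 2 * X * U R n - U R ((n : ℤ) - 1)) * hU
          + 4 * X ^ 2 * p1 - 4 * X * q0 + p0
    refine ⟨hP, ?_⟩
    linear_combination (norm := ring_nf)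
      T R ((n : ℤ) + 2) * hT3 - (X ^ 2 - 1) * U R ((n : ℤ) + 1) * hU2 + 2 * X * hP - q1
  | neg_add_one n ih1 ih2 =>
    obtain ⟨pa, qa⟩ := ih1
    obtain ⟨pb, _⟩ := ih2
    have hT : T R (-(n : ℤ) - 1) = 2 * X * T R (-(n : ℤ)) - T R (-(n : ℤ) + 1) := by
      have h := T_sub_one R (-(n : ℤ)); rwa [] at h
    have hU : U R (-(n : ℤ) - 2) = 2 * X * U R (-(n : ℤ) - 1) - U R (-(n : ℤ)) := by
      have h := U_sub_two R (-(n : ℤ)); rwa [] at h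
    simp only [show -(n : ℤ) + 1 - 1 = -(n : ℤ) from by ring] at pb
    simp only [show -(n : ℤ) - 1 - 1 = -(n : ℤ) - 2 from by ring,
      show -(n : ℤ) - 1 + 1 = -(n : ℤ) from by ring]
    constructor
    · linear_combination (norm := ring_nf)
        (T R (-(n : ℤ) - 1) + 2 * X * T R (-(n : ℤ)) - T R (-(n : ℤ) + 1)) * hT
          - (X ^ 2 - 1) * (U R (-(n : ℤ) - 2) + 2 * X * U R (-(n : ℤ) - 1)
            - U R (-(n : ℤ))) * hU
          + 4 * X ^ 2 * pa - 4 * X * qa + pb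
    · linear_combination (norm := ring_nf)
        T R (-(n : ℤ)) * hT - (X ^ 2 - 1) * U R (-(n : ℤ) - 1) * hU + 2 * X * pa - qa

/-- For `n ≥ 1` and complex `w, s` with `s² = (1 + w)/2`,
`T_n(w) − 1 = (w − 1)·U_{n−1}(s)²`, where `T_n` and `U_{n−1}` are the Chebyshev
polynomials of the first and second kind. -/
theorem cheb_T_sub_one_eq (n : ℕ) (hn : 1 ≤ n) (w s : ℂ) (hs : s ^ 2 = (1 + w) / 2) :
    (Polynomial.Chebyshev.T ℂ n).eval w - 1 =
      (w - 1) * ((Polynomial.Chebyshev.U ℂ ((n : ℤ) - 1)).eval s) ^ 2 := by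
  have hw : w = 2 * s ^ 2 - 1 := by rw [hs]; ring
  have hcomp : (Polynomial.Chebyshev.T ℂ ((n : ℤ) * 2)).eval s
      = (Polynomial.Chebyshev.T ℂ n).eval w := by
    rw [Polynomial.Chebyshev.T_mul, eval_comp, Polynomial.Chebyshev.T_two]
    simp [hw]
  have hmul := congrArg (eval s) (Polynomial.Chebyshev.T_mul_T ℂ (n : ℤ) (n : ℤ))
  have hpell := congrArg (eval s) (cheb_pell ℂ (n : ℤ)).1
  simp only [eval_mul, eval_add, eval_sub, eval_pow, eval_one, eval_X, eval_ofNat,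
    sub_self, Polynomial.Chebyshev.T_zero] at hmul hpell
  rw [← hcomp]
  have h2n : (n : ℤ) + (n : ℤ) = (n : ℤ) * 2 := by ring
  rw [h2n] at hmul
  have hws : w - 1 = 2 * (s ^ 2 - 1) := by rw [hw]; ring
  rw [hws]
  linear_combination 2 * hpell - hmul
end

section
/- Let P, Q ∈ ℂ[X] be polynomials of degrees d ≥ 1 and e ≥ 1 respectively, each with no repeated roots, and let R ∈ ℂ[X] be a polynomial of degree r ≥ 1 such that R(λμ) = 0 for every root λ of P and every root μ of Q. If u, v : ℕ → ℂ satisfy the linear recurrences ∑_{i=0}^{d} P.coeff(i)·u(n+i) = 0 and ∑_{i=0}^{e} Q.coeff(i)·v(n+i) = 0 for all n ∈ ℕ, then the product sequence p(n) = u(n)·v(n) satisfies ∑_{i=0}^{r} R.coeff(i)·p(n+i) = 0 for all n ∈ ℕ. -/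
open Polynomial Matrix

/-- A geometric sequence `c^n` with `F(c)=0` satisfies the recurrence of `F`. -/
lemma geom_satisfies_rec (F : Polynomial ℂ) {c : ℂ} (hc : F.IsRoot c) (n : ℕ) :
    ∑ i ∈ Finset.range (F.natDegree + 1), F.coeff i * c ^ (n + i) = 0 := by
  have h : ∑ i ∈ Finset.range (F.natDegree + 1), F.coeff i * c ^ (n + i)
      = (∑ i ∈ Finset.range (F.natDegree + 1), F.coeff i * c ^ i) * c ^ n := by
    rw [Finset.sum_mul]
    exact Finset.sum_congr rfl fun i _ => by rw [pow_add]; ring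
  rw [h, ← Polynomial.eval_eq_sum_range, hc, zero_mul]

/-- Uniqueness of solutions of a linear recurrence with nonzero leading coefficient. -/
lemma rec_unique (F : Polynomial ℂ) (hF : F.coeff F.natDegree ≠ 0) (u w : ℕ → ℂ)
    (hu : ∀ n, ∑ i ∈ Finset.range (F.natDegree + 1), F.coeff i * u (n + i) = 0)
    (hw : ∀ n, ∑ i ∈ Finset.range (F.natDegree + 1), F.coeff i * w (n + i) = 0)
    (h0 : ∀ k < F.natDegree, u k = w k) : ∀ n, u n = w n := by
  set d := F.natDegree with hd
  intro n
  induction n using Nat.strong_induction_on with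
  | _ n ih =>
    rcases lt_or_ge n d with h | h
    · exact h0 n h
    · set m := n - d with hm
      have hn : n = m + d := by omega
      have h1 := hu m
      have h2 := hw m
      rw [Finset.sum_range_succ] at h1 h2
      have hsum : ∑ i ∈ Finset.range d, F.coeff i * u (m + i)
          = ∑ i ∈ Finset.range d, F.coeff i * w (m + i) := by
        refine Finset.sum_congr rfl fun i hi => ?_
        rw [ih (m + i) (by simp at hi; omega)]
      have : F.coeff d * u (m + d) = F.coeff d * w (m + d) := by
        have := h1.trans h2.symm
        rw [hsum] at this
        exact add_left_cancel this
      rw [hn]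
      exact mul_left_cancel₀ hF this

/-- Any solution of the recurrence of a squarefree `P` of positive degree is a linear
combination of geometric sequences of roots of `P`. -/

lemma rec_eq_sum_geom (P : Polynomial ℂ) (hP : 1 ≤ P.natDegree) (hPsf : Squarefree P)
    (u : ℕ → ℂ)
    (hu : ∀ n, ∑ i ∈ Finset.range (P.natDegree + 1), P.coeff i * u (n + i) = 0) :
    ∃ (a lam : Fin P.natDegree → ℂ), (∀ j, P.IsRoot (lam j)) ∧
      ∀ n, u n = ∑ j, a j * lam j ^ n := by
  set d := P.natDegree with hd
  have hP0 : P ≠ 0 := hPsf.ne_zero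
  have hsep : P.Separable := PerfectField.separable_iff_squarefree.mpr hPsf
  have hnodup : P.roots.Nodup := Polynomial.nodup_roots hsep
  have hsplit : P.Splits := IsAlgClosed.splits P
  have hcard : Multiset.card P.roots = d := by
    have := Polynomial.Splits.natDegree_eq_card_roots hsplit
    simpa using this.symm
  set s : Finset ℂ := P.roots.toFinset with hs
  have hscard : s.card = d := by
    rw [hs, Multiset.toFinset_card_of_nodup hnodup, hcard]
  let e : s ≃ Fin d := s.equivFinOfCardEq hscard
  set lam : Fin d → ℂ := fun j => ((e.symm j : s) : ℂ) with hlam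
  have hlaminj : Function.Injective lam := by
    intro i j hij
    exact e.symm.injective (Subtype.ext hij)
  have hroot : ∀ j, P.IsRoot (lam j) := by
    intro j
    exact isRoot_of_mem_roots (Multiset.mem_toFinset.mp (e.symm j).2)
  set M : Matrix (Fin d) (Fin d) ℂ := (Matrix.vandermonde lam)ᵀ with hM
  have hdet : M.det ≠ 0 := by
    rw [hM, Matrix.det_transpose, Matrix.det_vandermonde]
    rw [Finset.prod_ne_zero_iff]
    intro i _
    rw [Finset.prod_ne_zero_iff]
    intro j hj
    rw [Finset.mem_Ioi] at hj
    exact sub_ne_zero_of_ne fun h => absurd (hlaminj h.symm) (ne_of_lt hj)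
  set u0 : Fin d → ℂ := fun k => u k with hu0
  set a : Fin d → ℂ := M⁻¹ *ᵥ u0 with ha
  have hMa : M *ᵥ a = u0 := by
    rw [ha, Matrix.mulVec_mulVec, Matrix.mul_nonsing_inv M (isUnit_iff_ne_zero.mpr hdet),
      Matrix.one_mulVec]
  refine ⟨a, lam, hroot, ?_⟩
  set w : ℕ → ℂ := fun n => ∑ j, a j * lam j ^ n with hwdef
  have hw : ∀ n, ∑ i ∈ Finset.range (d + 1), P.coeff i * w (n + i) = 0 := by
    intro n
    have : ∑ i ∈ Finset.range (d + 1), P.coeff i * w (n + i)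
        = ∑ j, a j * (∑ i ∈ Finset.range (d + 1), P.coeff i * lam j ^ (n + i)) := by
      simp only [hwdef, Finset.mul_sum]
      rw [Finset.sum_comm]
      exact Finset.sum_congr rfl fun j _ => Finset.sum_congr rfl fun i _ => by ring
    rw [this]
    refine Finset.sum_eq_zero fun j _ => ?_
    rw [hd, geom_satisfies_rec P (hroot j), mul_zero]
  have hinit : ∀ k, k < d → u k = w k := by
    intro k hk
    have h1 : u0 ⟨k, hk⟩ = u k := rfl
    rw [← h1, ← hMa]
    show (M *ᵥ a) ⟨k, hk⟩ = _
    rw [Matrix.mulVec]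
    show ∑ j, M ⟨k, hk⟩ j * a j = _
    refine Finset.sum_congr rfl fun j _ => ?_
    rw [hM]
    show lam j ^ (k : ℕ) * a j = _
    ring
  have hlead : P.coeff d ≠ 0 := by
    rw [hd, ← Polynomial.leadingCoeff]
    exact Polynomial.leadingCoeff_ne_zero.mpr hP0
  intro n
  exact rec_unique P hlead u w hu hw hinit n

/-- If `P, Q ∈ ℂ[X]` are squarefree of positive degree, `R ∈ ℂ[X]`
has positive degree and vanishes at every product `λμ` of a root `λ` of `P` and a root
`μ` of `Q`, and `u, v` satisfy the linear recurrences determined by `P` and `Q`, then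
`p(n) = u(n)·v(n)` satisfies the linear recurrence determined by `R`. -/
theorem product_of_recurrences (P Q R : Polynomial ℂ)
    (hP : 1 ≤ P.natDegree) (hQ : 1 ≤ Q.natDegree) (hR : 1 ≤ R.natDegree)
    (hPsf : Squarefree P) (hQsf : Squarefree Q)
    (hroot : ∀ lam mu : ℂ, P.IsRoot lam → Q.IsRoot mu → R.IsRoot (lam * mu))
    (u v : ℕ → ℂ)
    (hu : ∀ n : ℕ, ∑ i ∈ Finset.range (P.natDegree + 1), P.coeff i * u (n + i) = 0)
    (hv : ∀ n : ℕ, ∑ i ∈ Finset.range (Q.natDegree + 1), Q.coeff i * v (n + i) = 0) :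
    ∀ n : ℕ,
      ∑ i ∈ Finset.range (R.natDegree + 1), R.coeff i * (u (n + i) * v (n + i)) = 0 := by
  obtain ⟨a, lam, hlr, hue⟩ := rec_eq_sum_geom P hP hPsf u hu
  obtain ⟨b, mu, hmr, hve⟩ := rec_eq_sum_geom Q hQ hQsf v hv
  intro n
  have key : ∀ m, u m * v m = ∑ j, ∑ l, (a j * b l) * (lam j * mu l) ^ m := by
    intro m
    rw [hue m, hve m, Finset.sum_mul_sum]
    exact Finset.sum_congr rfl fun j _ => Finset.sum_congr rfl fun l _ => by
      rw [mul_pow]; ring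
  calc ∑ i ∈ Finset.range (R.natDegree + 1), R.coeff i * (u (n + i) * v (n + i))
      = ∑ j, ∑ l, (a j * b l) *
          ∑ i ∈ Finset.range (R.natDegree + 1), R.coeff i * (lam j * mu l) ^ (n + i) := by
        simp only [key, Finset.mul_sum]
        rw [Finset.sum_comm]
        refine Finset.sum_congr rfl fun j _ => ?_
        rw [Finset.sum_comm]
        exact Finset.sum_congr rfl fun l _ => Finset.sum_congr rfl fun i _ => by ring
    _ = 0 := by
        refine Finset.sum_eq_zero fun j _ => Finset.sum_eq_zero fun l _ => ?_
        rw [geom_satisfies_rec R (hroot _ _ (hlr j) (hmr l)), mul_zero]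
end
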